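/- arXiv:2110.10060 — 3 statements merged into one kernel-verified Lean document; each statement's English description precedes it below -/
import Mathlib

section
/- Let A and Ã be finitely supported matrix masks. Then D_{Ã^T} ∘ S_A = id on sequences if and only if Σ_r Ã_r^T A_{r+2k} equals the identity matrix when k = 0 and the zero matrix when k ≠ 0. -/
open scoped BigOperators
open Matrix

/-- Subdivision operator `(S_A c)_j = ∑_k A_{j-2k} c_k`. -/
noncomputable def subd {m : ℕ} (A : ℤ → Matrix (Fin (2 * m)) (Fin (2 * m)) ℝ)
    (c : ℤ → Fin (2 * m) → ℝ) : ℤ → Fin (2 * m) → ℝ :=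
  fun j => ∑ᶠ k : ℤ, (A (j - 2 * k)).mulVec (c k)

/-- Decomposition operator `(D_M c)_j = ∑_i M_{i-2j} c_i`. -/
noncomputable def decomp {m : ℕ} (M : ℤ → Matrix (Fin (2 * m)) (Fin (2 * m)) ℝ)
    (c : ℤ → Fin (2 * m) → ℝ) : ℤ → Fin (2 * m) → ℝ :=
  fun j => ∑ᶠ i : ℤ, (M (i - 2 * j)).mulVec (c i)

section Aux

variable {m : ℕ}

/-- `mulVec` by a fixed matrix, as an additive hom in the vector. -/
def mvRight (M : Matrix (Fin (2 * m)) (Fin (2 * m)) ℝ) :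
    (Fin (2 * m) → ℝ) →+ (Fin (2 * m) → ℝ) where
  toFun v := M.mulVec v
  map_zero' := Matrix.mulVec_zero M
  map_add' := Matrix.mulVec_add M

/-- `mulVec` of a fixed vector, as an additive hom in the matrix. -/
def mvLeft (v : Fin (2 * m) → ℝ) :
    Matrix (Fin (2 * m)) (Fin (2 * m)) ℝ →+ (Fin (2 * m) → ℝ) where
  toFun M := M.mulVec v
  map_zero' := Matrix.zero_mulVec v
  map_add' M N := Matrix.add_mulVec M N v

lemma aff_inj (a b : ℤ) (hb : b ≠ 0) : Function.Injective (fun k : ℤ => a - b * k) := by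
  intro x y h
  simp only at h
  have : b * x = b * y := by omega
  exact mul_left_cancel₀ hb this

/-- The key computation: the composition `D_{Atᵀ} ∘ S_A` as a single finsum. -/
lemma comp_eq {m : ℕ} (A At : ℤ → Matrix (Fin (2 * m)) (Fin (2 * m)) ℝ)
    (hA : (Function.support A).Finite) (hAt : (Function.support At).Finite)
    (c : ℤ → Fin (2 * m) → ℝ) (j : ℤ) :
    decomp (fun j => (At j)ᵀ) (subd A c) j =
      ∑ᶠ k : ℤ, (∑ᶠ r : ℤ, (At r)ᵀ * A (r + 2 * (j - k))).mulVec (c k) := by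
  classical
  have hsub : ∀ i : ℤ,
      (Function.support fun k : ℤ => (A (i - 2 * k)).mulVec (c k)).Finite := by
    intro i
    refine (hA.preimage ((aff_inj i 2 (by norm_num)).injOn)).subset ?_
    intro k hk
    simp only [Function.mem_support] at hk ⊢
    exact fun h0 => hk (by rw [h0, Matrix.zero_mulVec])
  have step1 : decomp (fun j => (At j)ᵀ) (subd A c) j =
      ∑ᶠ i : ℤ, ∑ᶠ k : ℤ, ((At (i - 2 * j))ᵀ * A (i - 2 * k)).mulVec (c k) := by
    unfold decomp subd
    refine finsum_congr fun i => ?_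
    rw [show ((At (i - 2 * j))ᵀ).mulVec (∑ᶠ k : ℤ, (A (i - 2 * k)).mulVec (c k)) =
        (mvRight (At (i - 2 * j))ᵀ) (∑ᶠ k : ℤ, (A (i - 2 * k)).mulVec (c k)) from rfl,
      AddMonoidHom.map_finsum _ (hsub i)]
    refine finsum_congr fun k => ?_
    simp [mvRight, Matrix.mulVec_mulVec]
  -- the finite set of relevant `i`
  have hinj : Function.Injective (fun i : ℤ => i - 2 * j) := by
    intro x y hxy; dsimp at hxy; omega
  set T : Finset ℤ := (hAt.preimage hinj.injOn).toFinset with hT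
  have hTmem : ∀ i : ℤ, i ∈ T ↔ At (i - 2 * j) ≠ 0 := by
    intro i
    simp [hT, Set.Finite.mem_toFinset, Set.mem_preimage, Function.mem_support]
  have houtersub : ∀ (g : ℤ → ℤ → Fin (2 * m) → ℝ),
      (∀ i, At (i - 2 * j) = 0 → ∀ k, g i k = 0) →
      (Function.support fun i => ∑ᶠ k : ℤ, g i k) ⊆ ↑T := by
    intro g hg i hi
    simp only [Function.mem_support] at hi
    rw [Finset.mem_coe, hTmem]
    intro h0
    apply hi
    exact (finsum_congr fun k => hg i h0 k).trans finsum_zero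
  have hinner : ∀ i k : ℤ, A (i - 2 * k) = 0 →
      ((At (i - 2 * j))ᵀ * A (i - 2 * k)).mulVec (c k) = 0 := by
    intro i k h; rw [h, mul_zero, Matrix.zero_mulVec]
  have hinnerfin : ∀ i : ℤ,
      (Function.support fun k : ℤ => ((At (i - 2 * j))ᵀ * A (i - 2 * k)).mulVec (c k)).Finite := by
    intro i
    refine (hA.preimage ((aff_inj i 2 (by norm_num)).injOn)).subset ?_
    intro k hk
    simp only [Function.mem_support, Set.mem_preimage] at hk ⊢
    exact fun h0 => hk (hinner i k h0)
  have step2 : (∑ᶠ i : ℤ, ∑ᶠ k : ℤ, ((At (i - 2 * j))ᵀ * A (i - 2 * k)).mulVec (c k)) =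
      ∑ᶠ k : ℤ, ∑ᶠ i : ℤ, ((At (i - 2 * j))ᵀ * A (i - 2 * k)).mulVec (c k) := by
    rw [finsum_eq_finset_sum_of_support_subset _
      (houtersub _ (fun i h0 k => by rw [Matrix.transpose_eq_zero.mpr h0, zero_mul,
        Matrix.zero_mulVec]))]
    rw [sum_finsum_comm T _ (fun i _ => hinnerfin i)]
    refine finsum_congr fun k => ?_
    refine (finsum_eq_finset_sum_of_support_subset _ ?_).symm
    intro i hi
    simp only [Function.mem_support] at hi
    rw [Finset.mem_coe, hTmem]
    intro h0
    exact hi (by rw [Matrix.transpose_eq_zero.mpr h0, zero_mul, Matrix.zero_mulVec])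
  rw [step1, step2]
  refine finsum_congr fun k => ?_
  have reindex : (∑ᶠ i : ℤ, ((At (i - 2 * j))ᵀ * A (i - 2 * k)).mulVec (c k)) =
      ∑ᶠ r : ℤ, ((At r)ᵀ * A (r + 2 * (j - k))).mulVec (c k) := by
    rw [← finsum_comp_equiv (Equiv.addRight (2 * j))]
    refine finsum_congr fun r => ?_
    simp only [Equiv.coe_addRight]
    rw [show r + 2 * j - 2 * j = r by ring, show r + 2 * j - 2 * k = r + 2 * (j - k) by ring]
  rw [reindex]
  rw [show (∑ᶠ r : ℤ, ((At r)ᵀ * A (r + 2 * (j - k))).mulVec (c k)) =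
      ∑ᶠ r : ℤ, (mvLeft (c k)) ((At r)ᵀ * A (r + 2 * (j - k))) from rfl,
    ← AddMonoidHom.map_finsum]
  · rfl
  · refine hAt.subset ?_
    intro r hr
    simp only [Function.mem_support] at hr ⊢
    exact fun h0 => hr (by rw [Matrix.transpose_eq_zero.mpr h0, zero_mul])

lemma Phi_fin {m : ℕ} (A At : ℤ → Matrix (Fin (2 * m)) (Fin (2 * m)) ℝ)
    (hAt : (Function.support At).Finite) (l : ℤ) :
    (Function.support fun r : ℤ => (At r)ᵀ * A (r + 2 * l)).Finite := by
  refine hAt.subset ?_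
  intro r hr
  simp only [Function.mem_support] at hr ⊢
  exact fun h0 => hr (by rw [Matrix.transpose_eq_zero.mpr h0, zero_mul])

end Aux

/-- `D_{Atᵀ} ∘ S_A = id` iff `∑_r At_rᵀ A_{r+2k} = δ_{k,0} · I`. -/
theorem biorthogonality_iff {m : ℕ}
    (A At : ℤ → Matrix (Fin (2 * m)) (Fin (2 * m)) ℝ)
    (hA : (Function.support A).Finite) (hAt : (Function.support At).Finite) :
    (∀ c : ℤ → Fin (2 * m) → ℝ, decomp (fun j => (At j)ᵀ) (subd A c) = c) ↔
      (∀ k : ℤ, (∑ᶠ r : ℤ, (At r)ᵀ * A (r + 2 * k)) =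
        if k = 0 then (1 : Matrix (Fin (2 * m)) (Fin (2 * m)) ℝ) else 0) := by
  classical
  constructor
  · intro h k
    ext i b
    set c : ℤ → Fin (2 * m) → ℝ := fun k' => if k' = 0 then Pi.single b 1 else 0 with hc
    have hck := congrFun (h c) k
    rw [comp_eq A At hA hAt c k] at hck
    have hsingle : (∑ᶠ k' : ℤ,
        (∑ᶠ r : ℤ, (At r)ᵀ * A (r + 2 * (k - k'))).mulVec (c k')) =
        (∑ᶠ r : ℤ, (At r)ᵀ * A (r + 2 * k)).mulVec (Pi.single b 1) := by
      rw [finsum_eq_single _ (0 : ℤ)]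
      · simp [hc]
      · intro k' hk'
        simp [hc, hk', Matrix.mulVec_zero]
    rw [hsingle] at hck
    have hrhs : c k = if k = 0 then Pi.single b (1:ℝ) else 0 := rfl
    rw [hrhs] at hck
    have := congrFun hck i
    simp only [Matrix.mulVec_single, MulOpposite.op_one, one_smul, Matrix.col_apply] at this
    by_cases hk : k = 0
    · subst hk
      simp only [if_pos rfl] at this ⊢
      rw [this]
      by_cases hib : i = b <;> simp [Matrix.one_apply, hib, Pi.single_apply]
    · simp only [if_neg hk] at this ⊢
      rw [this]
      simp
  · intro h c
    funext j
    rw [comp_eq A At hA hAt c j]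
    rw [finsum_congr (fun k => by rw [h (j - k)])]
    rw [finsum_eq_single _ j]
    · simp
    · intro k hk
      rw [if_neg (by omega), Matrix.zero_mulVec]
end

section
/- Let A and Ã be finitely supported matrix masks whose Laurent symbols satisfy Ã^♯(z) A(z) + Ã^♯(−z) A(−z) = 2I for all z on the unit circle (as formal Laurent polynomial identity), where Ã^♯(z) = Σ_k Ã_k^T z^{−k}. Then for every sequence c : ℤ → ℝ^{2m}, D_{Ã^T} S_A c = c. -/
open scoped BigOperators
open Matrix

/-- Key consequence of the symbol identity: for even `l`,
`∑ᶠ i, (At i)ᵀ * A (i + l) = δ_{l,0} • 1`. -/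
lemma key_even {m : ℕ}
    (A At : ℤ → Matrix (Fin (2 * m)) (Fin (2 * m)) ℝ)
    (hAt : (Function.support At).Finite)
    (hsymb : ∀ l : ℤ, (∑ᶠ i : ℤ, ((1 : ℝ) + (-1 : ℝ) ^ l) • ((At i)ᵀ * A (i + l))) =
      if l = 0 then (2 : ℝ) • (1 : Matrix (Fin (2 * m)) (Fin (2 * m)) ℝ) else 0)
    (l : ℤ) (hl : Even l) :
    (∑ᶠ i : ℤ, (At i)ᵀ * A (i + l)) =
      if l = 0 then (1 : Matrix (Fin (2 * m)) (Fin (2 * m)) ℝ) else 0 := by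
  have h := hsymb l
  rw [hl.neg_one_zpow] at h
  have hfin : (Function.support fun i : ℤ => (At i)ᵀ * A (i + l)).Finite := by
    apply hAt.subset
    intro i hi
    simp only [Function.mem_support] at hi ⊢
    intro h0
    exact hi (by simp [h0])
  have h2 : ((1 : ℝ) + 1) = (2 : ℝ) := by norm_num
  rw [h2] at h
  rw [← smul_finsum' (2 : ℝ) hfin] at h
  have h3 : (2 : ℝ) • (∑ᶠ i : ℤ, (At i)ᵀ * A (i + l)) =
      (2 : ℝ) • (if l = 0 then (1 : Matrix (Fin (2 * m)) (Fin (2 * m)) ℝ) else 0) := by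
    rw [h]; split_ifs <;> simp
  exact smul_right_injective _ (two_ne_zero) h3

/-- If the formal Laurent identity `At^♯(z) A(z) + At^♯(−z) A(−z) = 2I` holds
(stated coefficientwise: the coefficient of `z^l` is `2I` for `l = 0` and `0` otherwise,
where `At^♯(z) = ∑_k At_kᵀ z^{−k}`), then `D_{Atᵀ} S_A c = c` for every sequence `c`. -/
theorem symbol_biorthogonality_implies_id {m : ℕ}
    (A At : ℤ → Matrix (Fin (2 * m)) (Fin (2 * m)) ℝ)
    (hA : (Function.support A).Finite) (hAt : (Function.support At).Finite)
    (hsymb : ∀ l : ℤ, (∑ᶠ i : ℤ, ((1 : ℝ) + (-1 : ℝ) ^ l) • ((At i)ᵀ * A (i + l))) =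
      if l = 0 then (2 : ℝ) • (1 : Matrix (Fin (2 * m)) (Fin (2 * m)) ℝ) else 0) :
    ∀ c : ℤ → Fin (2 * m) → ℝ, decomp (fun j => (At j)ᵀ) (subd A c) = c := by
  intro c
  funext j
  -- finite index sets
  have hSi : ((fun i : ℤ => i - 2 * j) ⁻¹' Function.support At).Finite :=
    hAt.preimage (fun a _ b _ h => by omega)
  have hKi : ∀ i : ℤ, ((fun k : ℤ => i - 2 * k) ⁻¹' Function.support A).Finite :=
    fun i => hA.preimage (fun a _ b _ h => by omega)
  set Si : Finset ℤ := hSi.toFinset with hSidef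
  set Sk : Finset ℤ := insert j (Si.biUnion fun i => (hKi i).toFinset) with hSkdef
  have hjSk : j ∈ Sk := Finset.mem_insert_self _ _
  -- support facts
  have hsupp1 : (Function.support fun i : ℤ =>
      ((At (i - 2 * j))ᵀ).mulVec (subd A c i)) ⊆ ↑Si := by
    intro i hi
    simp only [Function.mem_support] at hi
    simp only [hSidef, Set.Finite.coe_toFinset, Set.mem_preimage, Function.mem_support]
    intro h0
    exact hi (by simp [h0])
  have hsupp2 : ∀ i : ℤ, (Function.support fun k : ℤ =>
      (A (i - 2 * k)).mulVec (c k)).Finite := by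
    intro i
    apply (hKi i).subset
    intro k hk
    simp only [Function.mem_support] at hk
    simp only [Set.mem_preimage, Function.mem_support]
    intro h0
    exact hk (by simp [h0])
  have hsupp2' : ∀ i ∈ Si, (Function.support fun k : ℤ =>
      ((At (i - 2 * j))ᵀ).mulVec ((A (i - 2 * k)).mulVec (c k))) ⊆ ↑Sk := by
    intro i hi k hk
    simp only [Function.mem_support] at hk
    have hkA : i - 2 * k ∈ Function.support A := by
      simp only [Function.mem_support]
      intro h0
      exact hk (by simp [h0])
    exact Finset.mem_coe.2 (Finset.mem_insert_of_mem (Finset.mem_biUnion.2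
      ⟨i, hi, (hKi i).mem_toFinset.2 hkA⟩))
  -- main computation
  have step1 : decomp (fun j => (At j)ᵀ) (subd A c) j =
      ∑ i ∈ Si, ((At (i - 2 * j))ᵀ).mulVec (subd A c i) := by
    unfold decomp
    exact finsum_eq_sum_of_support_subset _ hsupp1
  have step2 : ∀ i ∈ Si, ((At (i - 2 * j))ᵀ).mulVec (subd A c i) =
      ∑ k ∈ Sk, (((At (i - 2 * j))ᵀ) * A (i - 2 * k)).mulVec (c k) := by
    intro i hi
    unfold subd
    have hdist : (At (i - 2 * j))ᵀ *ᵥ (∑ᶠ k : ℤ, A (i - 2 * k) *ᵥ c k) =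
        ∑ᶠ k : ℤ, (At (i - 2 * j))ᵀ *ᵥ (A (i - 2 * k) *ᵥ c k) := by
      have h := ((Matrix.mulVecLin ((At (i - 2 * j))ᵀ)).toAddMonoidHom).map_finsum (hsupp2 i)
      simp only [LinearMap.toAddMonoidHom_coe, Matrix.mulVecLin_apply] at h
      exact h
    rw [hdist, finsum_eq_sum_of_support_subset _ (hsupp2' i hi)]
    exact Finset.sum_congr rfl fun k _ => Matrix.mulVec_mulVec _ _ _
  have key : ∀ k : ℤ, (∑ i ∈ Si, ((At (i - 2 * j))ᵀ) * A (i - 2 * k)) =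
      if k = j then (1 : Matrix (Fin (2 * m)) (Fin (2 * m)) ℝ) else 0 := by
    intro k
    have hsupp3 : (Function.support fun i : ℤ =>
        ((At (i - 2 * j))ᵀ) * A (i - 2 * k)) ⊆ ↑Si := by
      intro i hi
      simp only [Function.mem_support] at hi
      simp only [hSidef, Set.Finite.coe_toFinset, Set.mem_preimage, Function.mem_support]
      intro h0
      exact hi (by simp [h0])
    rw [← finsum_eq_sum_of_support_subset _ hsupp3]
    have hre : (∑ᶠ i : ℤ, ((At (i - 2 * j))ᵀ) * A (i - 2 * k)) =
        ∑ᶠ i : ℤ, (At i)ᵀ * A (i + (2 * j - 2 * k)) := by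
      rw [← finsum_comp_equiv (Equiv.subRight (2 * j))
        (f := fun i => (At i)ᵀ * A (i + (2 * j - 2 * k)))]
      apply finsum_congr
      intro i
      simp only [Equiv.subRight_apply]
      have he : i - 2 * j + (2 * j - 2 * k) = i - 2 * k := by omega
      rw [he]
    rw [hre, key_even A At hAt hsymb _ ⟨j - k, by ring⟩]
    by_cases hkj : k = j
    · have h0 : 2 * j - 2 * k = 0 := by omega
      rw [if_pos h0, if_pos hkj]
    · have h0 : ¬(2 * j - 2 * k = 0) := by omega
      rw [if_neg h0, if_neg hkj]
  rw [step1, Finset.sum_congr rfl step2, Finset.sum_comm]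
  have final : ∀ k : ℤ, (∑ i ∈ Si, (((At (i - 2 * j))ᵀ) * A (i - 2 * k)).mulVec (c k)) =
      if k = j then c k else 0 := by
    intro k
    have hmap : (∑ i ∈ Si, (((At (i - 2 * j))ᵀ) * A (i - 2 * k)).mulVec (c k)) =
        (∑ i ∈ Si, ((At (i - 2 * j))ᵀ) * A (i - 2 * k)).mulVec (c k) := by
      exact (map_sum (AddMonoidHom.mk' (fun M : Matrix (Fin (2 * m)) (Fin (2 * m)) ℝ =>
        M.mulVec (c k)) (fun a b => Matrix.add_mulVec a b (c k))) _ _).symm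
    rw [hmap, key k]
    split_ifs
    · exact Matrix.one_mulVec _
    · exact Matrix.zero_mulVec _
  rw [Finset.sum_congr rfl (fun k _ => final k), Finset.sum_ite_eq' Sk j c, if_pos hjSk]
end

section
/- Let A and B̃ be finitely supported matrix masks whose symbols satisfy B̃^♯(z) A(z) + B̃^♯(−z) A(−z) = 0 as Laurent polynomials, where B̃^♯(z) = Σ_k B̃_k^T z^{−k}. Then D_{B̃^T} ∘ S_A = 0 on sequences. -/
open scoped BigOperators
open Matrix

/-- If the formal Laurent identity `Bt^♯(z) A(z) + Bt^♯(−z) A(−z) = 0` holds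
(stated coefficientwise, `Bt^♯(z) = ∑_k Bt_kᵀ z^{−k}`), then `D_{Btᵀ} ∘ S_A = 0`. -/
theorem symbol_cancellation_implies_zero {m : ℕ}
    (A Bt : ℤ → Matrix (Fin (2 * m)) (Fin (2 * m)) ℝ)
    (hA : (Function.support A).Finite) (hBt : (Function.support Bt).Finite)
    (hsymb : ∀ l : ℤ, (∑ᶠ i : ℤ, ((1 : ℝ) + (-1 : ℝ) ^ l) • ((Bt i)ᵀ * A (i + l))) = 0) :
    ∀ c : ℤ → Fin (2 * m) → ℝ, decomp (fun j => (Bt j)ᵀ) (subd A c) = 0 := by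
  -- Key consequence of the symbol identity at even shifts.
  have key : ∀ l : ℤ, (∑ᶠ i : ℤ, (Bt i)ᵀ * A (i + 2 * l)) = 0 := by
    intro l
    have h := hsymb (2 * l)
    have hpow : ((-1 : ℝ)) ^ (2 * l) = 1 := by
      rw [_root_.zpow_mul]
      norm_num
    have hsupp : (Function.support fun i : ℤ => (Bt i)ᵀ * A (i + 2 * l)).Finite := by
      apply hBt.subset
      intro i hi
      simp only [Function.mem_support] at hi ⊢
      intro h0
      apply hi
      rw [h0, Matrix.transpose_zero, Matrix.zero_mul]
    have h2 : (∑ᶠ i : ℤ, ((1 : ℝ) + (-1 : ℝ) ^ (2 * l)) • ((Bt i)ᵀ * A (i + 2 * l)))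
        = (2 : ℝ) • ∑ᶠ i : ℤ, (Bt i)ᵀ * A (i + 2 * l) := by
      rw [smul_finsum' (2 : ℝ) hsupp]
      apply finsum_congr
      intro i
      rw [hpow]
      norm_num
    rw [h2] at h
    have := smul_right_injective (Matrix (Fin (2 * m)) (Fin (2 * m)) ℝ)
      (two_ne_zero (α := ℝ))
    have h0 : (2 : ℝ) • (∑ᶠ i : ℤ, (Bt i)ᵀ * A (i + 2 * l))
        = (2 : ℝ) • (0 : Matrix (Fin (2 * m)) (Fin (2 * m)) ℝ) := by
      rw [h, smul_zero]
    exact this h0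
  intro c
  funext j
  -- finsets
  set SA := hA.toFinset with hSA
  set SB := hBt.toFinset with hSB
  set I : Finset ℤ := SB.image (· + 2 * j) with hI
  -- inner sums have finite support
  have hinner : ∀ i : ℤ,
      (Function.support fun k : ℤ => (A (i - 2 * k)).mulVec (c k)).Finite := by
    intro i
    have : (Function.support fun k : ℤ => (A (i - 2 * k)).mulVec (c k)) ⊆
        (fun k : ℤ => i - 2 * k) ⁻¹' (Function.support A) := by
      intro k hk
      simp only [Function.mem_support, Set.mem_preimage] at hk ⊢
      intro h0
      apply hk
      rw [h0, Matrix.zero_mulVec]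
    refine Set.Finite.subset (hA.preimage ?_) this
    intro a _ b _ hab
    dsimp only at hab
    omega
  -- the composed operator at j
  show (∑ᶠ i : ℤ, ((fun j => (Bt j)ᵀ) (i - 2 * j)).mulVec
      (∑ᶠ k : ℤ, (A (i - 2 * k)).mulVec (c k))) = 0
  -- pull mulVec inside the inner finsum
  have step1 : ∀ i : ℤ, ((Bt (i - 2 * j))ᵀ).mulVec (∑ᶠ k : ℤ, (A (i - 2 * k)).mulVec (c k))
      = ∑ᶠ k : ℤ, ((Bt (i - 2 * j))ᵀ * A (i - 2 * k)).mulVec (c k) := by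
    intro i
    have h := AddMonoidHom.map_finsum ((Bt (i - 2 * j))ᵀ.mulVecLin).toAddMonoidHom (hinner i)
    simp only [LinearMap.toAddMonoidHom_coe, Matrix.mulVecLin_apply] at h
    rw [h]
    exact finsum_congr fun k => Matrix.mulVec_mulVec (c k) _ _
  -- outer support
  have houter : (Function.support fun i : ℤ =>
      ∑ᶠ k : ℤ, ((Bt (i - 2 * j))ᵀ * A (i - 2 * k)).mulVec (c k)) ⊆ ↑I := by
    intro i hi
    simp only [Function.mem_support] at hi
    by_contra hiI
    apply hi
    have hB0 : Bt (i - 2 * j) = 0 := by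
      by_contra hne
      apply hiI
      simp only [hI, Finset.coe_image, Set.mem_image, Finset.mem_coe]
      exact ⟨i - 2 * j, by simp [hSB, Function.mem_support, hne], by omega⟩
    have : ∀ k : ℤ, ((Bt (i - 2 * j))ᵀ * A (i - 2 * k)).mulVec (c k) = 0 := by
      intro k
      rw [hB0, Matrix.transpose_zero, Matrix.zero_mul, Matrix.zero_mulVec]
    simp [this]
  -- inner per-i support ⊆ K for a common finset K
  set K : Finset ℤ := (I ×ˢ SA).image (fun p : ℤ × ℤ => (p.1 - p.2) / 2) with hK
  have hinnerK : ∀ i ∈ I, (Function.support fun k : ℤ =>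
      ((Bt (i - 2 * j))ᵀ * A (i - 2 * k)).mulVec (c k)) ⊆ ↑K := by
    intro i hiI k hk
    simp only [Function.mem_support] at hk
    have hAne : A (i - 2 * k) ≠ 0 := by
      intro h0
      apply hk
      rw [h0, Matrix.mul_zero, Matrix.zero_mulVec]
    have hmemA : i - 2 * k ∈ SA := by
      simp [hSA, Function.mem_support, hAne]
    simp only [hK, Finset.coe_image, Set.mem_image, Finset.mem_coe, Finset.mem_product]
    exact ⟨(i, i - 2 * k), ⟨hiI, hmemA⟩, by omega⟩
  calc (∑ᶠ i : ℤ, ((fun j => (Bt j)ᵀ) (i - 2 * j)).mulVec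
        (∑ᶠ k : ℤ, (A (i - 2 * k)).mulVec (c k)))
      = ∑ i ∈ I, ∑ k ∈ K, ((Bt (i - 2 * j))ᵀ * A (i - 2 * k)).mulVec (c k) := by
        rw [finsum_congr step1,
          finsum_eq_sum_of_support_subset _ houter]
        refine Finset.sum_congr rfl fun i hi => ?_
        exact finsum_eq_sum_of_support_subset _ (hinnerK i hi)
    _ = ∑ k ∈ K, (∑ i ∈ I, (Bt (i - 2 * j))ᵀ * A (i - 2 * k)).mulVec (c k) := by
        rw [Finset.sum_comm]
        refine Finset.sum_congr rfl fun k _ => ?_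
        exact (map_sum (AddMonoidHom.mk' (fun M : Matrix (Fin (2 * m)) (Fin (2 * m)) ℝ =>
          M.mulVec (c k)) (fun M N => Matrix.add_mulVec M N (c k))) _ _).symm
    _ = 0 := by
        refine Finset.sum_eq_zero fun k _ => ?_
        have hshift : (∑ i ∈ I, (Bt (i - 2 * j))ᵀ * A (i - 2 * k))
            = ∑ᶠ s : ℤ, (Bt s)ᵀ * A (s + 2 * (j - k)) := by
          have hsupp : (Function.support fun s : ℤ => (Bt s)ᵀ * A (s + 2 * (j - k))) ⊆ ↑SB := by
            intro s hs
            simp only [Function.mem_support] at hs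
            simp only [hSB, Set.Finite.coe_toFinset, Function.mem_support]
            intro h0
            apply hs
            rw [h0, Matrix.transpose_zero, Matrix.zero_mul]
          rw [finsum_eq_sum_of_support_subset _ hsupp, hI,
            Finset.sum_image (by intro a _ b _ h; exact add_right_cancel h)]
          refine Finset.sum_congr rfl fun s _ => ?_
          rw [show s + 2 * j - 2 * j = s by ring,
            show s + 2 * j - 2 * k = s + 2 * (j - k) by ring]
        rw [hshift, key (j - k), Matrix.zero_mulVec]
end
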